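/- Conservation of the second moment Z_0 under the effective gradient flow: let P be a finite set of index quadruples and let E : ℝ → ({0,…,p−1} → ℝ^d) be differentiable with Z_0(E(t)) = Σ_k |E_k(t)|² > 0 for all t, and suppose each embedding satisfies the gradient-flow ODE dE_k/dt = −(1/Z_0) G_k + (ℓ_0/Z_0²)·2E_k, where ℓ_0(E) = Σ_{(i,j,m,n)∈P} |E_i + E_j − E_m − E_n|² and G_k = 2 Σ_{(i,j,m,n)∈P} (E_i + E_j − E_m − E_n)(δ_{ik} + δ_{jk} − δ_{mk} − δ_{nk}). Then Z_0(E(t)) is constant in t. -/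

import Mathlib

open RealInnerProductSpace


/-- The parallelogram loss `ℓ₀(E) = ∑_{(i,j,m,n)∈P} ‖E i + E j − E m − E n‖²`. -/
noncomputable def parallelogramLoss {p d : ℕ}
    (P : Finset (Fin p × Fin p × Fin p × Fin p))
    (E : Fin p → EuclideanSpace ℝ (Fin d)) : ℝ :=
  ∑ q ∈ P, ‖E q.1 + E q.2.1 - E q.2.2.1 - E q.2.2.2‖ ^ 2

/-- The second moment `Z₀(E) = ∑_k ‖E_k‖²`. -/
noncomputable def secondMoment {p d : ℕ}
    (E : Fin p → EuclideanSpace ℝ (Fin d)) : ℝ :=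
  ∑ k, ‖E k‖ ^ 2

/-- The gradient `∂ℓ₀/∂E_k = 2 ∑_{(i,j,m,n)∈P} (E i + E j − E m − E n)(δ_{ik}+δ_{jk}−δ_{mk}−δ_{nk})`. -/
noncomputable def lossGrad {p d : ℕ}
    (P : Finset (Fin p × Fin p × Fin p × Fin p))
    (E : Fin p → EuclideanSpace ℝ (Fin d)) (k : Fin p) :
    EuclideanSpace ℝ (Fin d) :=
  (2 : ℝ) • ∑ q ∈ P,
    (((if q.1 = k then (1 : ℝ) else 0) + (if q.2.1 = k then 1 else 0)
      - (if q.2.2.1 = k then 1 else 0) - (if q.2.2.2 = k then 1 else 0))) •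
      (E q.1 + E q.2.1 - E q.2.2.1 - E q.2.2.2)

lemma key (p d : ℕ) (P : Finset (Fin p × Fin p × Fin p × Fin p))
    (E : Fin p → EuclideanSpace ℝ (Fin d)) :
    ∑ k, ⟪E k, lossGrad P E k⟫ = 2 * parallelogramLoss P E := by
  unfold lossGrad parallelogramLoss
  simp only [inner_smul_right, inner_sum, Finset.mul_sum]
  rw [Finset.sum_comm]
  refine Finset.sum_congr rfl fun q _ => ?_
  simp only [add_mul, sub_mul, ite_mul, one_mul, zero_mul, mul_add, mul_sub, mul_ite, mul_zero,
    Finset.sum_add_distrib, Finset.sum_sub_distrib, Finset.mul_sum,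
    Finset.sum_ite_eq, Finset.mem_univ, if_true]
  have h := real_inner_self_eq_norm_sq (E q.1 + E q.2.1 - E q.2.2.1 - E q.2.2.2)
  simp only [inner_add_left, inner_sub_left] at h
  linarith

/-- Conservation of the second moment `Z₀` under the effective gradient flow
`dE_k/dt = −(1/Z₀) ∂ℓ₀/∂E_k + (ℓ₀/Z₀²)·2E_k`. -/
theorem secondMoment_conserved
    (p d : ℕ) (P : Finset (Fin p × Fin p × Fin p × Fin p))
    (E : ℝ → Fin p → EuclideanSpace ℝ (Fin d))
    (hZ : ∀ t, 0 < secondMoment (E t))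
    (hode : ∀ t (k : Fin p), HasDerivAt (fun s => E s k)
      (-(1 / secondMoment (E t)) • lossGrad P (E t) k
        + (parallelogramLoss P (E t) / (secondMoment (E t)) ^ 2) • ((2 : ℝ) • E t k)) t) :
    ∀ t s : ℝ, secondMoment (E t) = secondMoment (E s) := by
  set f := fun t => secondMoment (E t) with hf
  have hderiv : ∀ t, HasDerivAt f 0 t := by
    intro t
    set Z := secondMoment (E t) with hZdef
    set L := parallelogramLoss P (E t) with hLdef
    set D := fun k => (-(1 / Z) • lossGrad P (E t) k + (L / Z ^ 2) • ((2 : ℝ) • E t k))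
      with hD
    have hk : ∀ k : Fin p, HasDerivAt (fun s => ⟪E s k, E s k⟫)
        (⟪E t k, D k⟫ + ⟪D k, E t k⟫) t := by
      intro k
      have := (hode t k).inner ℝ (hode t k)
      rw [← hZdef, ← hLdef] at this
      exact this
    have hsum : HasDerivAt (fun s => ∑ k, ⟪E s k, E s k⟫)
        (∑ k, (⟪E t k, D k⟫ + ⟪D k, E t k⟫)) t := by
      simpa using HasDerivAt.fun_sum (fun k _ => hk k)
    have heq : (fun s => ∑ k, ⟪E s k, E s k⟫) = f := by
      funext s
      simp only [real_inner_self_eq_norm_sq, hf, secondMoment]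
    have hzero : (∑ k, (⟪E t k, D k⟫ + ⟪D k, E t k⟫)) = 0 := by
      have hcomm : ∀ k : Fin p, ⟪E t k, D k⟫ + ⟪D k, E t k⟫ = 2 * ⟪E t k, D k⟫ := by
        intro k; rw [real_inner_comm]; ring
      simp only [hcomm]
      have hexp : ∀ k : Fin p, ⟪E t k, D k⟫ =
          -(1 / Z) * ⟪E t k, lossGrad P (E t) k⟫ + (L / Z ^ 2) * (2 * ‖E t k‖ ^ 2) := by
        intro k
        simp only [hD, inner_add_right, inner_smul_right, real_inner_self_eq_norm_sq]
        try ring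
      simp only [hexp]
      rw [← Finset.mul_sum, Finset.sum_add_distrib, ← Finset.mul_sum, ← Finset.mul_sum]
      rw [key]
      have : ∑ k, 2 * ‖E t k‖ ^ 2 = 2 * Z := by
        rw [hZdef]; simp [secondMoment, Finset.mul_sum]
      rw [this]
      have hZne : Z ≠ 0 := ne_of_gt (hZ t)
      field_simp
      ring
    rw [← heq]
    rw [← hzero]
    exact hsum
  intro t s
  exact is_const_of_deriv_eq_zero (fun x => (hderiv x).differentiableAt)
    (fun x => (hderiv x).deriv) t s
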